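/- Let (V, μ) be a countable weighted rooted tree with finite total measure, and let T be the Hardy operator Tf(t) = (1/μ(S_t)) Σ_{s ⪰ t} |f(s)| μ(s). Then for every q ∈ (1,∞) and every f ∈ ℓ^q(V, μ), one has ‖Tf‖_{ℓ^q(V,μ)} ≤ 2 (q/(q−1))^{1/q} ‖f‖_{ℓ^q(V,μ)}. -/

import Mathlib

open MeasureTheory Set
open scoped ENNReal NNReal

/-- Rooted tree encoded by a parent map: `s ⪰ t` iff `∃ n, p^[n] s = t`;
the shadow of `t` is `S_t = {s | s ⪰ t}`. -/
def shadow {V : Type*} (p : V → V) (t : V) : Set V :=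
  {s | ∃ n : ℕ, p^[n] s = t}

/-- The Hardy-type operator `Tf(t) = (1/μ(S_t)) ∑_{s ⪰ t} |f(s)| μ(s)`. -/
noncomputable def hardyOp {V : Type*} (p : V → V) (μ f : V → ℝ) (t : V) : ℝ :=
  (1 / ∑' s : shadow p t, μ s.1) * ∑' s : shadow p t, |f s.1| * μ s.1


lemma hardy_aux_two_rpow {x : ℝ} (hx : 1 ≤ x) : x ≤ (2:ℝ) ^ x := by
  have l2 : (0.6931471803 : ℝ) < Real.log 2 := Real.log_two_gt_d9
  have h2x : (2:ℝ) ^ x = Real.exp (x * Real.log 2) := by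
    rw [Real.rpow_def_of_pos (by norm_num)]; ring_nf
  rcases le_total x 3 with h3 | h3
  · have := Real.add_one_le_exp (x * Real.log 2)
    nlinarith [Real.exp_pos (x * Real.log 2)]
  · have h : (2:ℝ) ^ x = (Real.exp ((x/2) * Real.log 2))^2 := by
      rw [h2x, ← Real.exp_nat_mul]
      · norm_num; ring_nf
    have hy : (1 + x/2*Real.log 2)^2 ≤ (Real.exp (x/2*Real.log 2))^2 := by
      apply pow_le_pow_left₀ (by positivity)
      linarith [Real.add_one_le_exp ((x/2) * Real.log 2)]
    have hx0 : (0:ℝ) ≤ x := by linarith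
    have hL : (0:ℝ) ≤ Real.log 2 - 0.6931471803 := by linarith
    have h4 : (0.48:ℝ) ≤ Real.log 2 ^ 2 := by nlinarith
    have h5 : (0.48:ℝ) * x^2 ≤ Real.log 2 ^2 * x^2 := by nlinarith [sq_nonneg x]
    nlinarith [hy, mul_nonneg (sub_nonneg.2 h3) hx0, mul_nonneg hx0 hL]

lemma hardy_aux_conj_le {q : ℝ} (hq : 1 < q) : q/(q-1) ≤ 2 * (q/(q-1)) ^ (1/q) := by
  set c := q/(q-1) with hc
  have hc1 : 1 < c := by rw [hc]; rw [lt_div_iff₀ (by linarith)]; linarith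
  have hc0 : 0 < c := by linarith
  have hsum : 1/c + 1/q = 1 := by rw [hc]; field_simp; ring
  have h2 : c ^ (1/c : ℝ) ≤ 2 := by
    have hcc : c ≤ (2:ℝ) ^ c := hardy_aux_two_rpow hc1.le
    calc c ^ (1/c : ℝ) ≤ ((2:ℝ) ^ c) ^ (1/c : ℝ) :=
          Real.rpow_le_rpow hc0.le hcc (by positivity)
      _ = 2 := by
          rw [← Real.rpow_mul (by norm_num : (0:ℝ) ≤ 2), mul_one_div_cancel (by linarith : c ≠ 0),
            Real.rpow_one]
  calc c = c ^ (1/c + 1/q : ℝ) := by rw [hsum, Real.rpow_one]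
    _ = c ^ (1/c : ℝ) * c ^ (1/q : ℝ) := Real.rpow_add hc0 _ _
    _ ≤ 2 * c ^ (1/q : ℝ) := by
        apply mul_le_mul_of_nonneg_right h2 (by positivity)

lemma hardy_aux_integral {q : ℝ} (hq : 1 < q) {c : ℝ} (hc : 0 ≤ c) :
    ∫⁻ t in Ioi (0:ℝ), (Iio c).indicator (fun u => ENNReal.ofReal (q * u^(q-2))) t
      = ENNReal.ofReal (q/(q-1) * c^(q-1)) := by
  rw [lintegral_indicator measurableSet_Iio, Measure.restrict_restrict measurableSet_Iio,
    Set.Iio_inter_Ioi]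
  have hint : IntegrableOn (fun u : ℝ => q * u^(q-2)) (Ioo 0 c) volume := by
    have := (intervalIntegral.intervalIntegrable_rpow' (show (-1:ℝ) < q-2 by linarith)
      (a := 0) (b := c)).const_mul q
    rw [intervalIntegrable_iff_integrableOn_Ioo_of_le hc] at this
    exact this
  have hnn : 0 ≤ᵐ[volume.restrict (Ioo 0 c)] fun u : ℝ => q * u^(q-2) := by
    refine ae_restrict_of_forall_mem measurableSet_Ioo fun u hu => ?_
    have : (0:ℝ) < u := hu.1
    positivity
  rw [← ofReal_integral_eq_lintegral_ofReal hint hnn]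
  congr 1
  rw [← integral_Ioc_eq_integral_Ioo, ← intervalIntegral.integral_of_le hc,
    intervalIntegral.integral_const_mul,
    integral_rpow (Or.inl (show (-1:ℝ) < q-2 by linarith))]
  rw [Real.zero_rpow (show q-2+1 ≠ 0 by intro h; exact absurd h (by intro h'; linarith))]
  rw [show q-2+1 = q-1 by ring]
  field_simp
  ring

/-- The Hardy-type operator is strong `(q,q)` continuous for `1 < q < ∞`:
`‖Tf‖_{ℓ^q(V,μ)} ≤ 2 (q/(q-1))^{1/q} ‖f‖_{ℓ^q(V,μ)}`. -/
theorem hardy_strong_q_q {V : Type*} [Countable V] (p : V → V) (a : V)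
    (hroot : p a = a) (hreach : ∀ t : V, ∃ n : ℕ, p^[n] t = a)
    (μ : V → ℝ) (hμpos : ∀ t, 0 < μ t) (hμsum : Summable μ)
    (q : ℝ) (hq : 1 < q)
    (f : V → ℝ) (hf : Summable fun s => |f s| ^ q * μ s) :
    (∑' t : V, |hardyOp p μ f t| ^ q * μ t) ^ (1 / q) ≤
      2 * (q / (q - 1)) ^ (1 / q) * (∑' s : V, |f s| ^ q * μ s) ^ (1 / q) := by
  letI : MeasurableSpace V := ⊤
  have hSmble : ∀ (S : Set V), MeasurableSet S := fun _ => trivial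
  have hq0 : (0:ℝ) < q := by linarith
  have hq1 : (0:ℝ) < q - 1 := by linarith
  set ν : V → ℝ≥0∞ := fun s => ENNReal.ofReal (μ s) with hν
  set φ : V → ℝ≥0∞ := fun s => ENNReal.ofReal |f s| with hφ
  have hν0 : ∀ s, ν s ≠ 0 := fun s => by
    simp [hν, ENNReal.ofReal_eq_zero, not_le, hμpos s]
  set m : Measure V := Measure.sum (fun s => (ν s) • Measure.dirac s) with hm
  have hint : ∀ (h : V → ℝ≥0∞), ∫⁻ s, h s ∂m = ∑' s, ν s * h s := by
    intro h
    rw [hm, lintegral_sum_measure]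
    congr 1; ext s
    rw [lintegral_smul_measure, lintegral_dirac, smul_eq_mul]
  have hintI : ∀ (S : Set V) (h : V → ℝ≥0∞),
      ∫⁻ s in S, h s ∂m = ∑' s, ν s * S.indicator h s := by
    intro S h
    rw [← lintegral_indicator (hSmble S), hint]
  have hintS : ∀ (S : Set V) (h : V → ℝ≥0∞),
      ∫⁻ s in S, h s ∂m = ∑' s : S, ν s * h s := by
    intro S h
    rw [hintI]
    rw [show (fun s => ν s * S.indicator h s) = S.indicator (fun s => ν s * h s) by
      ext s; by_cases hs : s ∈ S <;> simp [indicator, hs]]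
    exact (tsum_subtype S _).symm
  have hms : ∀ (S : Set V), m S = ∑' s : S, ν s := by
    intro S
    rw [← setLIntegral_one, hintS]
    simp
  have hmfin : m univ ≠ ∞ := by
    rw [hms]
    rw [show ∑' s : (univ : Set V), ν s = ∑' s, ν s from tsum_univ ν]
    rw [hν, ← ENNReal.ofReal_tsum_of_nonneg (fun s => (hμpos s).le) hμsum]
    exact ENNReal.ofReal_ne_top
  haveI : IsFiniteMeasure m := ⟨lt_top_iff_ne_top.2 hmfin⟩
  have hfμ : Summable (fun s => |f s| * μ s) := by
    apply Summable.of_nonneg_of_le (fun s => mul_nonneg (abs_nonneg _) (hμpos s).le)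
      (fun s => ?_) (hμsum.add hf)
    have h0 : (0:ℝ) ≤ |f s| ^ q := Real.rpow_nonneg (abs_nonneg _) q
    have hμ0 := (hμpos s).le
    rcases le_total (|f s|) 1 with h1 | h1
    · nlinarith
    · have h2 : |f s| ≤ |f s| ^ q := by
        calc |f s| = |f s| ^ (1:ℝ) := (Real.rpow_one _).symm
        _ ≤ |f s| ^ q := Real.rpow_le_rpow_of_exponent_le h1 hq.le
      nlinarith
  set A : V → ℝ≥0∞ := fun t => m (shadow p t) with hA
  set G : V → ℝ≥0∞ := fun t => ∫⁻ s in shadow p t, φ s ∂m with hG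
  set F : V → ℝ≥0∞ := fun t => G t / A t with hF
  have hself : ∀ t, t ∈ shadow p t := fun t => ⟨0, rfl⟩
  have hAge : ∀ t s, s ∈ shadow p t → ν s ≤ A t := by
    intro t s hs
    show ν s ≤ m (shadow p t)
    rw [hms]
    exact ENNReal.le_tsum (⟨s, hs⟩ : shadow p t)
  have hA0 : ∀ t, A t ≠ 0 := fun t =>
    fun h => hν0 t (le_antisymm (h ▸ hAge t t (hself t)) zero_le)
  have hAtop : ∀ t, A t ≠ ∞ := fun t =>
    ne_top_of_le_ne_top hmfin (measure_mono (subset_univ _))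
  have hGtot : ∫⁻ s, φ s ∂m ≠ ∞ := by
    rw [hint]
    rw [show (fun s => ν s * φ s) = fun s => ENNReal.ofReal (|f s| * μ s) by
      ext s; rw [hν, hφ, ← ENNReal.ofReal_mul (hμpos s).le]; ring_nf]
    rw [← ENNReal.ofReal_tsum_of_nonneg (fun s => mul_nonneg (abs_nonneg _) (hμpos s).le) hfμ]
    exact ENNReal.ofReal_ne_top
  have hGtop : ∀ t, G t ≠ ∞ := fun t =>
    ne_top_of_le_ne_top hGtot (setLIntegral_le_lintegral _ _)
  have hFtop : ∀ t, F t ≠ ∞ := fun t =>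
    (ENNReal.div_lt_top (hGtop t) (hA0 t)).ne
  have hAof : ∀ t, A t = ENNReal.ofReal (∑' s : shadow p t, μ s.1) := by
    intro t
    show m (shadow p t) = _
    rw [hms, ENNReal.ofReal_tsum_of_nonneg (f := fun s : shadow p t => μ s.1) (fun s => (hμpos _).le)
      (hμsum.subtype (shadow p t))]
  have hGof : ∀ t, G t = ENNReal.ofReal (∑' s : shadow p t, |f s.1| * μ s.1) := by
    intro t
    show (∫⁻ s in shadow p t, φ s ∂m) = _
    rw [hintS, ENNReal.ofReal_tsum_of_nonneg (f := fun s : shadow p t => |f s.1| * μ s.1)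
      (fun s => mul_nonneg (abs_nonneg _) (hμpos _).le) (hfμ.subtype (shadow p t))]
    congr 1; ext s
    rw [hν, hφ, ← ENNReal.ofReal_mul (hμpos _).le]
    congr 1; ring
  have hAr : ∀ t, (0:ℝ) ≤ ∑' s : shadow p t, μ s.1 :=
    fun t => tsum_nonneg (fun s => (hμpos _).le)
  have hGr : ∀ t, (0:ℝ) ≤ ∑' s : shadow p t, |f s.1| * μ s.1 :=
    fun t => tsum_nonneg (fun s => mul_nonneg (abs_nonneg _) (hμpos _).le)
  have hop : ∀ t, hardyOp p μ f t = (F t).toReal := by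
    intro t
    rw [hF]
    show hardyOp p μ f t = (G t / A t).toReal
    rw [hAof, hGof, ENNReal.toReal_div, ENNReal.toReal_ofReal (hGr t),
      ENNReal.toReal_ofReal (hAr t), hardyOp, div_eq_mul_inv]
    ring
  have hop0 : ∀ t, 0 ≤ hardyOp p μ f t := fun t => (hop t) ▸ ENNReal.toReal_nonneg
  -- the maximal function
  set M : V → ℝ≥0∞ := fun s => ⨆ n : ℕ, F (p^[n] s) with hM
  have hanc : ∀ s t, s ∈ shadow p t → F t ≤ M s := by
    rintro s t ⟨n, rfl⟩
    rw [hM]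
    exact le_iSup (fun n => F (p^[n] s)) n
  have hFM : ∀ s, F s ≤ M s := fun s => hanc s s (hself s)
  have hMtop : ∀ s, M s ≠ ∞ := by
    intro s
    have : M s ≤ (∫⁻ u, φ u ∂m) / ν s := by
      rw [hM]
      apply iSup_le
      intro n
      apply ENNReal.div_le_div (setLIntegral_le_lintegral _ _)
      exact hAge (p^[n] s) s ⟨n, rfl⟩
    exact ne_top_of_le_ne_top (ENNReal.div_lt_top hGtot (hν0 s)).ne this
  have habsorb : ∀ (s : V) (N n : ℕ), p^[N] s = a → N ≤ n → p^[n] s = a := by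
    intro s N n hN hle
    have h : n = (n - N) + N := (Nat.sub_add_cancel hle).symm
    rw [h, Function.iterate_add_apply, hN, Function.iterate_fixed hroot]
  have weak : ∀ l : ℝ≥0∞, l ≠ 0 →
      l * m {s | l < M s} ≤ ∫⁻ s in {s | l < M s}, φ s ∂m := by
    intro l hl
    set Stop : Set V := {u | l < F u ∧ ∀ u', u ∈ shadow p u' → u' ≠ u → F u' ≤ l}
      with hStop
    have hdisj : Pairwise (Function.onFun Disjoint fun w : Stop => shadow p w.1) := by
      intro w1 w2 hne
      rw [Function.onFun, Set.disjoint_left]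
      rintro s ⟨n1, h1⟩ ⟨n2, h2⟩
      rcases le_total n1 n2 with hle | hle
      · have hsh : (w1 : V) ∈ shadow p w2.1 := by
          refine ⟨n2 - n1, ?_⟩
          rw [← h2, ← h1, ← Function.iterate_add_apply, Nat.sub_add_cancel hle]
        have hne' : w2.1 ≠ w1.1 := fun h => hne (Subtype.ext h.symm)
        exact absurd w2.2.1 (not_lt.2 (w1.2.2 w2.1 hsh hne'))
      · have hsh : (w2 : V) ∈ shadow p w1.1 := by
          refine ⟨n1 - n2, ?_⟩
          rw [← h1, ← h2, ← Function.iterate_add_apply, Nat.sub_add_cancel hle]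
        have hne' : w1.1 ≠ w2.1 := fun h => hne (Subtype.ext h)
        exact absurd w1.2.1 (not_lt.2 (w2.2.2 w1.1 hsh hne'))
    have hUnion : {s | l < M s} = ⋃ w : Stop, shadow p w.1 := by
      ext s
      simp only [mem_setOf_eq, mem_iUnion]
      constructor
      · intro hs
        obtain ⟨n0, hn0⟩ : ∃ n, l < F (p^[n] s) := by
          rw [hM] at hs; exact lt_iSup_iff.mp hs
        obtain ⟨N, hN⟩ := hreach s
        have hn0' : ∃ n, n ∈ Finset.range (N+1) ∧ l < F (p^[n] s) := by
          rcases le_or_gt n0 N with h | h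
          · exact ⟨n0, Finset.mem_range.2 (by omega), hn0⟩
          · refine ⟨N, Finset.mem_range.2 (by omega), ?_⟩
            have heq : p^[n0] s = p^[N] s := by rw [hN, habsorb s N n0 hN h.le]
            rwa [heq] at hn0
        set Jset := (Finset.range (N+1)).filter (fun n => l < F (p^[n] s)) with hJ
        have hJne : Jset.Nonempty := by
          obtain ⟨n1, hn1, hn1'⟩ := hn0'
          exact ⟨n1, Finset.mem_filter.2 ⟨hn1, hn1'⟩⟩
        set nstar := Jset.max' hJne with hnstar
        have hmemJ : nstar ∈ Jset := Jset.max'_mem hJne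
        have hnstarN : nstar ≤ N := by
          have := (Finset.mem_filter.1 hmemJ).1
          rw [Finset.mem_range] at this; omega
        have hnstarF : l < F (p^[nstar] s) := (Finset.mem_filter.1 hmemJ).2
        have htStop : p^[nstar] s ∈ Stop := by
          refine ⟨hnstarF, ?_⟩
          rintro u' ⟨mm, hmm⟩ hne'
          by_contra hFu'
          push_neg at hFu'
          rcases le_or_gt (mm + nstar) N with hcase | hcase
          · have hmemJ2 : mm + nstar ∈ Jset := by
              refine Finset.mem_filter.2 ⟨Finset.mem_range.2 (by omega), ?_⟩
              rw [Function.iterate_add_apply, hmm]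
              exact hFu'
            have : mm + nstar ≤ nstar := Jset.le_max' _ hmemJ2
            have hmm0 : mm = 0 := by omega
            rw [hmm0] at hmm
            exact hne' (by simpa using hmm.symm)
          · have hu'a : u' = a := by
              rw [← hmm, ← Function.iterate_add_apply]
              exact habsorb s N (mm + nstar) hN (by omega)
            have hNJ : N ∈ Jset := by
              refine Finset.mem_filter.2 ⟨Finset.mem_range.2 (by omega), ?_⟩
              rw [hN, ← hu'a]
              exact hFu'
            have hNle : N ≤ nstar := Jset.le_max' N hNJ
            have hnsN : nstar = N := by omega
            apply hne'
            rw [hu'a, ← hN, hnsN]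
        exact ⟨⟨p^[nstar] s, htStop⟩, ⟨nstar, rfl⟩⟩
      · rintro ⟨⟨u, hu⟩, hsu⟩
        exact lt_of_lt_of_le hu.1 (hanc s u hsu)
    rw [hUnion, measure_iUnion hdisj (fun w => hSmble _),
      lintegral_iUnion (fun w => hSmble _) hdisj, ← ENNReal.tsum_mul_left]
    apply ENNReal.tsum_le_tsum
    intro w
    have hlF : l ≤ F w.1 := (w.2.1).le
    calc l * m (shadow p w.1) ≤ F w.1 * A w.1 := by
          exact mul_le_mul' hlF le_rfl
      _ = G w.1 := by
          rw [hF]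
          exact ENNReal.div_mul_cancel (hA0 w.1) (hAtop w.1)
  -- conjugate exponent
  have hconj : Real.HolderConjugate q (q/(q-1)) := Real.HolderConjugate.conjExponent hq
  have hqc1 : 1 < q/(q-1) := by rw [lt_div_iff₀ hq1]; linarith
  have hqc0 : 0 < q/(q-1) := by linarith
  set Y : ℝ≥0∞ := (∫⁻ s, (φ s)^q ∂m) ^ (1/q) with hY
  have key : ∀ n : ℕ, ∫⁻ s, (min (M s) n)^q ∂m
      ≤ (ENNReal.ofReal (q/(q-1)) * Y)^q := by
    intro n
    set Mn : V → ℝ := fun s => (min (M s) n).toReal with hMn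
    have hMn0 : ∀ s, 0 ≤ Mn s := fun s => ENNReal.toReal_nonneg
    have hmintop : ∀ s, min (M s) (n:ℝ≥0∞) ≠ ∞ := fun s =>
      (lt_of_le_of_lt (min_le_right _ _) (ENNReal.natCast_lt_top n)).ne
    have hofMn : ∀ s, ENNReal.ofReal (Mn s) = min (M s) n := fun s =>
      ENNReal.ofReal_toReal (hmintop s)
    have hMnle : ∀ s, Mn s ≤ (n:ℝ) := by
      intro s
      rw [hMn]
      calc (min (M s) (n:ℝ≥0∞)).toReal ≤ ((n:ℝ≥0∞)).toReal :=
            ENNReal.toReal_mono (ENNReal.natCast_ne_top n) (min_le_right _ _)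
        _ = (n:ℝ) := by simp
    have hIeq : ∀ s, ENNReal.ofReal (Mn s ^ q) = (min (M s) n)^q := by
      intro s
      rw [← ENNReal.ofReal_rpow_of_nonneg (hMn0 s) hq0.le, hofMn]
    -- layer cake
    have hLC : ∫⁻ s, ENNReal.ofReal (Mn s ^ q) ∂m
        = ∫⁻ t in Ioi (0:ℝ), m {s | t < Mn s} * ENNReal.ofReal (q * t^(q-1)) := by
      have hg_intble : ∀ t > (0:ℝ), IntervalIntegrable (fun u => q * u^(q-1)) volume 0 t :=
        fun t _ => (intervalIntegral.intervalIntegrable_rpow'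
          (by linarith : (-1:ℝ) < q-1)).const_mul q
      have hg_nn : ∀ᵐ t ∂(volume.restrict (Ioi (0:ℝ))), 0 ≤ q * t^(q-1) := by
        refine ae_restrict_of_forall_mem measurableSet_Ioi fun t ht => ?_
        have h0 : (0:ℝ) < t := ht
        positivity
      have := lintegral_comp_eq_lintegral_meas_lt_mul m
        (f := Mn) (g := fun u => q * u^(q-1))
        (Filter.Eventually.of_forall hMn0) measurable_from_top.aemeasurable
        hg_intble hg_nn
      rw [← this]
      apply lintegral_congr
      intro s
      congr 1
      rw [intervalIntegral.integral_const_mul,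
        integral_rpow (Or.inl (by linarith : (-1:ℝ) < q-1)),
        Real.zero_rpow (by intro h; linarith [h] : q-1+1 ≠ 0),
        show q-1+1 = q by ring]
      field_simp
      ring
    -- pointwise weak-type bound on the integrand
    have hptw : ∀ t ∈ Ioi (0:ℝ), m {s | t < Mn s} * ENNReal.ofReal (q * t^(q-1))
        ≤ ENNReal.ofReal (q * t^(q-2)) * ∫⁻ s in {s | t < Mn s}, φ s ∂m := by
      intro t ht
      have ht0 : (0:ℝ) < t := ht
      have hsplit : ENNReal.ofReal (q * t^(q-1))
          = ENNReal.ofReal (q * t^(q-2)) * ENNReal.ofReal t := by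
        rw [← ENNReal.ofReal_mul (by positivity)]
        congr 1
        rw [mul_assoc]
        congr 1
        rw [← Real.rpow_add_one (ne_of_gt ht0)]
        congr 1
        ring
      rcases le_or_gt (n:ℝ) t with hcase | hcase
      · have hempty : {s | t < Mn s} = ∅ := by
          apply eq_empty_iff_forall_notMem.2
          intro s hs
          exact absurd hs (not_lt.2 ((hMnle s).trans hcase))
        simp [hempty]
      · have hseteq : {s | t < Mn s} = {s | ENNReal.ofReal t < M s} := by
          ext s
          simp only [mem_setOf_eq]
          rw [show (t < Mn s) ↔ (ENNReal.ofReal t < min (M s) n) from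
            ⟨fun h => by
              rw [← hofMn s]
              exact (ENNReal.ofReal_lt_ofReal_iff_of_nonneg ht0.le).2 h,
             fun h => by
              have := ENNReal.toReal_mono (hmintop s) h.le
              rw [ENNReal.toReal_ofReal ht0.le] at this
              rcases lt_or_eq_of_le this with h' | h'
              · exact h'
              · exfalso
                rw [← hofMn s, h'] at h
                exact lt_irrefl _ h⟩]
          constructor
          · intro h
            exact lt_of_lt_of_le h (min_le_left _ _)
          · intro h
            refine lt_min h ?_
            calc ENNReal.ofReal t < ENNReal.ofReal (n:ℝ) :=
                  (ENNReal.ofReal_lt_ofReal_iff_of_nonneg ht0.le).2 hcase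
              _ = (n:ℝ≥0∞) := by simp
        rw [hseteq, hsplit, mul_comm (m _), mul_assoc]
        apply mul_le_mul' le_rfl
        exact weak (ENNReal.ofReal t) (by simp [ENNReal.ofReal_eq_zero, not_le, ht0])
    have hstep1 : ∫⁻ s, ENNReal.ofReal (Mn s ^ q) ∂m ≤
        ∫⁻ t in Ioi (0:ℝ),
          ENNReal.ofReal (q * t^(q-2)) * ∫⁻ s in {s | t < Mn s}, φ s ∂m := by
      rw [hLC]
      exact setLIntegral_mono' measurableSet_Ioi hptw
    -- swap the order of integration
    have hswap : (∫⁻ t in Ioi (0:ℝ),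
          ENNReal.ofReal (q * t^(q-2)) * ∫⁻ s in {s | t < Mn s}, φ s ∂m)
        = ∑' s, (ν s * φ s) * ENNReal.ofReal (q/(q-1) * Mn s ^ (q-1)) := by
      have hmeas1 : ∀ s : V, Measurable (fun t : ℝ =>
          (ν s * φ s) * (Iio (Mn s)).indicator
            (fun u => ENNReal.ofReal (q * u^(q-2))) t) := by
        intro s
        apply Measurable.const_mul
        apply Measurable.indicator _ measurableSet_Iio
        exact ((measurable_id.pow_const (q-2)).const_mul q).ennreal_ofReal
      calc (∫⁻ t in Ioi (0:ℝ),
            ENNReal.ofReal (q * t^(q-2)) * ∫⁻ s in {s | t < Mn s}, φ s ∂m)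
          = ∫⁻ t in Ioi (0:ℝ), ∑' s, (ν s * φ s) * (Iio (Mn s)).indicator
              (fun u => ENNReal.ofReal (q * u^(q-2))) t := by
            apply lintegral_congr
            intro t
            rw [hintI, ← ENNReal.tsum_mul_left]
            congr 1
            ext s
            by_cases hs : t < Mn s
            · simp only [indicator, mem_setOf_eq, hs, if_pos, mem_Iio]
              ring
            · simp only [indicator, mem_setOf_eq, hs, if_neg, mem_Iio, if_false,
                mul_zero, not_false_iff]
        _ = ∑' s, ∫⁻ t in Ioi (0:ℝ), (ν s * φ s) * (Iio (Mn s)).indicator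
              (fun u => ENNReal.ofReal (q * u^(q-2))) t :=
            lintegral_tsum (fun s => (hmeas1 s).aemeasurable)
        _ = ∑' s, (ν s * φ s) * ENNReal.ofReal (q/(q-1) * Mn s ^ (q-1)) := by
            congr 1
            ext s
            rw [lintegral_const_mul' _ _ (by
              exact ENNReal.mul_ne_top ENNReal.ofReal_ne_top ENNReal.ofReal_ne_top)]
            congr 1
            exact hardy_aux_integral hq (hMn0 s)
    have hstep2 : (∑' s, (ν s * φ s) * ENNReal.ofReal (q/(q-1) * Mn s ^ (q-1)))
        = ENNReal.ofReal (q/(q-1)) *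
            ∫⁻ s, φ s * (ENNReal.ofReal (Mn s))^(q-1) ∂m := by
      rw [hint, ← ENNReal.tsum_mul_left]
      congr 1
      ext s
      rw [ENNReal.ofReal_mul hqc0.le,
        ← ENNReal.ofReal_rpow_of_nonneg (hMn0 s) (by linarith : (0:ℝ) ≤ q-1)]
      ring
    have hrpoweq : ∀ s, ((ENNReal.ofReal (Mn s))^(q-1))^(q/(q-1))
        = ENNReal.ofReal (Mn s ^ q) := by
      intro s
      rw [← ENNReal.rpow_mul, show (q-1) * (q/(q-1)) = q by field_simp,
        ENNReal.ofReal_rpow_of_nonneg (hMn0 s) hq0.le]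
    have hHolder : ∫⁻ s, φ s * (ENNReal.ofReal (Mn s))^(q-1) ∂m
        ≤ Y * (∫⁻ s, ENNReal.ofReal (Mn s ^ q) ∂m)^(1/(q/(q-1))) := by
      have h := ENNReal.lintegral_mul_le_Lp_mul_Lq m hconj
        (measurable_from_top.aemeasurable) (measurable_from_top.aemeasurable)
        (f := φ) (g := fun s => (ENNReal.ofReal (Mn s))^(q-1))
      simp only [Pi.mul_apply] at h
      refine le_trans h (le_of_eq ?_)
      rw [hY]
      congr 1
      rw [lintegral_congr hrpoweq]
    set In := ∫⁻ s, ENNReal.ofReal (Mn s ^ q) ∂m with hIn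
    have hchain : In ≤ (ENNReal.ofReal (q/(q-1)) * Y) * In^(1/(q/(q-1))) := by
      calc In ≤ ∫⁻ t in Ioi (0:ℝ),
            ENNReal.ofReal (q * t^(q-2)) * ∫⁻ s in {s | t < Mn s}, φ s ∂m := hstep1
        _ = ENNReal.ofReal (q/(q-1)) *
              ∫⁻ s, φ s * (ENNReal.ofReal (Mn s))^(q-1) ∂m := by
            rw [hswap, hstep2]
        _ ≤ ENNReal.ofReal (q/(q-1)) * (Y * In^(1/(q/(q-1)))) :=
            mul_le_mul' le_rfl hHolder
        _ = (ENNReal.ofReal (q/(q-1)) * Y) * In^(1/(q/(q-1))) := by ring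
    have hIntop : In ≠ ∞ := by
      have hle : In ≤ ENNReal.ofReal ((n:ℝ)^q) * m univ := by
        rw [hIn, ← setLIntegral_univ]
        calc ∫⁻ s in univ, ENNReal.ofReal (Mn s ^ q) ∂m
            ≤ ∫⁻ _ in univ, ENNReal.ofReal ((n:ℝ)^q) ∂m := by
              apply setLIntegral_mono' (hSmble _)
              intro s _
              exact ENNReal.ofReal_le_ofReal
                (Real.rpow_le_rpow (hMn0 s) (hMnle s) hq0.le)
          _ = ENNReal.ofReal ((n:ℝ)^q) * m univ := by
              rw [setLIntegral_const]
      exact ne_top_of_le_ne_top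
        (ENNReal.mul_ne_top ENNReal.ofReal_ne_top hmfin) hle
    have hdiv : In ^ (1/q) ≤ ENNReal.ofReal (q/(q-1)) * Y := by
      by_cases h0 : In = 0
      · rw [h0, ENNReal.zero_rpow_of_pos (by positivity)]
        exact zero_le
      · have hsum2 : In = In^(1/q) * In^(1/(q/(q-1))) := by
          rw [← ENNReal.rpow_add _ _ h0 hIntop,
            show 1/q + 1/(q/(q-1)) = 1 by
              rw [one_div, one_div]; exact hconj.inv_add_inv_eq_one,
            ENNReal.rpow_one]
        have hcan : In^(1/q) * In^(1/(q/(q-1)))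
            ≤ (ENNReal.ofReal (q/(q-1)) * Y) * In^(1/(q/(q-1))) := by
          rw [← hsum2]; exact hchain
        have hne0 : In^(1/(q/(q-1))) ≠ 0 := by
          simp only [ne_eq, ENNReal.rpow_eq_zero_iff, not_or, not_and, not_lt]
          exact ⟨fun h => absurd h h0, fun h => absurd h hIntop⟩
        have hnetop : In^(1/(q/(q-1))) ≠ ∞ := by
          simp only [ne_eq, ENNReal.rpow_eq_top_iff, not_or, not_and, not_lt]
          exact ⟨fun h => absurd h h0, fun h => absurd h hIntop⟩
        exact (ENNReal.mul_le_mul_iff_left hne0 hnetop).1 hcan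
    have hq' : (In^(1/q))^q ≤ (ENNReal.ofReal (q/(q-1)) * Y)^q :=
      ENNReal.rpow_le_rpow hdiv hq0.le
    rw [← ENNReal.rpow_mul, one_div, inv_mul_cancel₀ (ne_of_gt hq0),
      ENNReal.rpow_one] at hq'
    calc ∫⁻ s, (min (M s) n)^q ∂m = In := by
          rw [hIn]
          exact lintegral_congr (fun s => (hIeq s).symm)
      _ ≤ _ := hq'
  -- pass to the limit in n
  have hMlim : ∫⁻ s, (M s)^q ∂m ≤ (ENNReal.ofReal (q/(q-1)) * Y)^q := by
    have hsup : ∀ s, (⨆ n : ℕ, (min (M s) n)^q) = (M s)^q := by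
      intro s
      apply le_antisymm
      · exact iSup_le fun n => ENNReal.rpow_le_rpow (min_le_left _ _) hq0.le
      · obtain ⟨n, hn⟩ := ENNReal.exists_nat_gt (hMtop s)
        refine le_iSup_of_le n ?_
        rw [min_eq_left hn.le]
    calc ∫⁻ s, (M s)^q ∂m = ∫⁻ s, ⨆ n : ℕ, (min (M s) n)^q ∂m :=
          lintegral_congr (fun s => (hsup s).symm)
      _ = ⨆ n : ℕ, ∫⁻ s, (min (M s) n)^q ∂m :=
          lintegral_iSup (fun n => measurable_from_top)
            (fun i j hij s =>
              ENNReal.rpow_le_rpow (min_le_min le_rfl (Nat.cast_le.2 hij)) hq0.le)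
      _ ≤ _ := iSup_le key
  have hFlim : (∫⁻ s, (F s)^q ∂m)^(1/q) ≤ ENNReal.ofReal (q/(q-1)) * Y := by
    have h1 : ∫⁻ s, (F s)^q ∂m ≤ (ENNReal.ofReal (q/(q-1)) * Y)^q :=
      le_trans (lintegral_mono fun s => ENNReal.rpow_le_rpow (hFM s) hq0.le) hMlim
    have h2 := ENNReal.rpow_le_rpow h1 (by positivity : (0:ℝ) ≤ 1/q)
    rwa [← ENNReal.rpow_mul, mul_one_div_cancel (ne_of_gt hq0),
      ENNReal.rpow_one] at h2
  -- identify Y with the RHS sum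
  have hRnn : ∀ s : V, 0 ≤ |f s|^q * μ s :=
    fun s => mul_nonneg (Real.rpow_nonneg (abs_nonneg _) q) (hμpos s).le
  have hYof : ∫⁻ s, (φ s)^q ∂m = ENNReal.ofReal (∑' s, |f s|^q * μ s) := by
    rw [hint, ENNReal.ofReal_tsum_of_nonneg hRnn hf]
    congr 1
    ext s
    rw [hφ, hν, ENNReal.ofReal_rpow_of_nonneg (abs_nonneg _) hq0.le,
      ← ENNReal.ofReal_mul (hμpos s).le]
    congr 1
    ring
  -- identify the LHS sum
  have hLHS : (∑' t, |hardyOp p μ f t|^q * μ t)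
      = (∫⁻ s, (F s)^q ∂m).toReal := by
    rw [hint, ENNReal.tsum_toReal_eq (fun t => ENNReal.mul_ne_top
      ENNReal.ofReal_ne_top (ENNReal.rpow_ne_top_of_nonneg hq0.le (hFtop t)))]
    apply tsum_congr
    intro t
    rw [abs_of_nonneg (hop0 t), hop t, ENNReal.toReal_mul,
      ENNReal.toReal_ofReal (hμpos t).le, ENNReal.toReal_rpow]
    ring
  rw [hLHS]
  have hYtop : Y ≠ ∞ := by
    rw [hY, hYof]
    exact ENNReal.rpow_ne_top_of_nonneg (by positivity) ENNReal.ofReal_ne_top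
  have hfin : (ENNReal.ofReal (q/(q-1)) * Y) ≠ ∞ :=
    ENNReal.mul_ne_top ENNReal.ofReal_ne_top hYtop
  rw [ENNReal.toReal_rpow]
  have hmono := ENNReal.toReal_mono hfin hFlim
  refine le_trans hmono ?_
  rw [ENNReal.toReal_mul, ENNReal.toReal_ofReal hqc0.le, hY, hYof,
    ← ENNReal.toReal_rpow, ENNReal.toReal_ofReal (tsum_nonneg hRnn)]
  exact mul_le_mul_of_nonneg_right (hardy_aux_conj_le hq)
    (Real.rpow_nonneg (tsum_nonneg hRnn) _)
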